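/- Let S be a nonnegative integrable random variable on a probability space with m := 1 − E[S] satisfying 0 < m < 1, fix T > 0 and let α ∈ (0,1]. Let x₀ ∈ ℝ and let I : ℝ → [0,∞) be any function satisfying C_BS(x, I(x)) = E[(S − e^x)₊] + α·m for all x ≥ x₀. Then, denoting by c the unique real number with N(c) = α·m, the function x ↦ I(x) − √(2x/T) converges to c/√T as x → ∞. In particular the Put-implied volatility satisfies I_S^p(x) = I_S^1(x) = √(2x/T) + N^{-1}(m)/√T + o(1) and the α-collateralised Call implied volatility satisfies I_S^α(x) = √(2x/T) + N^{-1}(α·m)/√T + o(1) as x → ∞. -/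

import Mathlib

open MeasureTheory Filter

/-- Standard normal cumulative distribution function. -/
noncomputable def stdNormalCDF (y : ℝ) : ℝ :=
  ∫ t in Set.Iic y, Real.exp (-t ^ 2 / 2) / Real.sqrt (2 * Real.pi)

/-- Black-Scholes d₊ (maturity `T`, log-strike `x`, volatility `σ`). -/
noncomputable def dplus (T x σ : ℝ) : ℝ := -x / (σ * Real.sqrt T) + σ * Real.sqrt T / 2

/-- Black-Scholes d₋ (maturity `T`, log-strike `x`, volatility `σ`). -/
noncomputable def dminus (T x σ : ℝ) : ℝ := -x / (σ * Real.sqrt T) - σ * Real.sqrt T / 2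

/-- Black-Scholes Call price (maturity `T`, log-strike `x`, volatility `σ`),
with the convention `CBS T x 0 = max (1 - exp x) 0`. -/
noncomputable def CBS (T x σ : ℝ) : ℝ :=
  if σ = 0 then max (1 - Real.exp x) 0
  else stdNormalCDF (dplus T x σ) - Real.exp x * stdNormalCDF (dminus T x σ)

/-- Black-Scholes Put price (maturity `T`, log-strike `x`, volatility `σ`),
with the convention `PBS T x 0 = max (exp x - 1) 0`. -/
noncomputable def PBS (T x σ : ℝ) : ℝ :=
  if σ = 0 then max (Real.exp x - 1) 0
  else Real.exp x * stdNormalCDF (-dminus T x σ) - stdNormalCDF (-dplus T x σ)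

-- auxiliary lemmas
noncomputable def gpdf (t : ℝ) : ℝ := Real.exp (-t ^ 2 / 2) / Real.sqrt (2 * Real.pi)

lemma sqrt_two_pi_pos : 0 < Real.sqrt (2 * Real.pi) :=
  Real.sqrt_pos.2 (by positivity)

lemma gpdf_pos (t : ℝ) : 0 < gpdf t :=
  div_pos (Real.exp_pos _) sqrt_two_pi_pos

lemma continuous_gpdf : Continuous gpdf := by
  unfold gpdf
  fun_prop

lemma integrable_gpdf : Integrable gpdf := by
  have h : Integrable (fun t : ℝ => Real.exp (-(1/2 : ℝ) * t ^ 2)) :=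
    integrable_exp_neg_mul_sq (by norm_num)
  have := h.div_const (Real.sqrt (2 * Real.pi))
  refine this.congr (Filter.Eventually.of_forall fun t => ?_)
  unfold gpdf
  ring_nf

lemma hasDerivAt_stdNormalCDF (y : ℝ) : HasDerivAt stdNormalCDF (gpdf y) y := by
  have heq : stdNormalCDF = fun y => stdNormalCDF 0 + ∫ t in (0:ℝ)..y, gpdf t := by
    funext z
    have := intervalIntegral.integral_Iic_sub_Iic
      (integrable_gpdf.integrableOn (s := Set.Iic (0:ℝ)))
      (integrable_gpdf.integrableOn (s := Set.Iic z)) (μ := volume)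
    show (∫ t in Set.Iic z, gpdf t) = (∫ t in Set.Iic 0, gpdf t) + ∫ t in (0:ℝ)..z, gpdf t
    linarith [this]
  rw [heq]
  simpa [Pi.add_def] using (hasDerivAt_const y (stdNormalCDF 0)).add
    (intervalIntegral.integral_hasDerivAt_right
      (integrable_gpdf.intervalIntegrable)
      (continuous_gpdf.stronglyMeasurable.stronglyMeasurableAtFilter)
      continuous_gpdf.continuousAt)

lemma continuous_stdNormalCDF : Continuous stdNormalCDF := by
  have : Differentiable ℝ stdNormalCDF := fun y => (hasDerivAt_stdNormalCDF y).differentiableAt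
  exact this.continuous

lemma strictMono_stdNormalCDF : StrictMono stdNormalCDF := by
  apply strictMono_of_deriv_pos
  intro y
  rw [(hasDerivAt_stdNormalCDF y).deriv]
  exact gpdf_pos y

lemma stdNormalCDF_nonneg (y : ℝ) : 0 ≤ stdNormalCDF y :=
  setIntegral_nonneg measurableSet_Iic fun t _ => (gpdf_pos t).le

lemma integral_Iic_t_gpdf (y : ℝ) :
    ∫ t in Set.Iic y, -t * gpdf t = gpdf y := by
  have hint : IntegrableOn (fun t : ℝ => -t * gpdf t) (Set.Iic y) := by
    have h1 : Integrable (fun t : ℝ => t * Real.exp (-(1/2 : ℝ) * t ^ 2)) :=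
      integrable_mul_exp_neg_mul_sq (by norm_num)
    have h2 := (h1.div_const (Real.sqrt (2 * Real.pi))).const_mul (-1)
    refine (h2.congr (Filter.Eventually.of_forall fun t => ?_)).integrableOn
    unfold gpdf
    ring_nf
  have hderiv : ∀ t ∈ Set.Iic y, HasDerivAt (fun t => gpdf t) (-t * gpdf t) t := by
    intro t _
    have h1 : HasDerivAt (fun t : ℝ => -t ^ 2 / 2) (-t) t := by
      have h := ((hasDerivAt_pow 2 t).neg).div_const 2
      exact h.congr_deriv (by norm_num; ring)
    have h2 := (h1.exp).div_const (Real.sqrt (2 * Real.pi))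
    refine h2.congr_deriv ?_
    unfold gpdf
    ring
  have htend : Tendsto (fun t => gpdf t) atBot (nhds 0) := by
    have h1 : Tendsto (fun t : ℝ => -t ^ 2 / 2) atBot atBot := by
      have hsq : Tendsto (fun t : ℝ => t ^ 2) atBot atTop := by
        have : Tendsto (fun t : ℝ => (-t) ^ 2) atBot atTop :=
          (tendsto_pow_atTop two_ne_zero).comp tendsto_neg_atBot_atTop
        simpa using this
      have := tendsto_neg_atTop_atBot.comp (hsq.atTop_div_const two_pos)
      refine this.congr fun t => by simp; ring
    have := (Real.tendsto_exp_atBot.comp h1).div_const (Real.sqrt (2 * Real.pi))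
    simpa [gpdf] using this
  have := MeasureTheory.integral_Iic_of_hasDerivAt_of_tendsto'
    (f := fun t => gpdf t) (f' := fun t => -t * gpdf t) hderiv hint htend
  simpa using this

lemma stdNormalCDF_le_of_neg {y : ℝ} (hy : y < 0) :
    stdNormalCDF y ≤ gpdf y / (-y) := by
  have hmono : ∀ t ∈ Set.Iic y, gpdf t ≤ (-t / -y) * gpdf t := by
    intro t ht
    have h1 : (1 : ℝ) ≤ -t / -y := by
      rw [le_div_iff₀ (by linarith)]
      simp only [Set.mem_Iic] at ht
      linarith
    nlinarith [gpdf_pos t, h1]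
  have hint : IntegrableOn (fun t : ℝ => (-t / -y) * gpdf t) (Set.Iic y) := by
    have h1 : IntegrableOn (fun t : ℝ => -t * gpdf t) (Set.Iic y) := by
      have h1 : Integrable (fun t : ℝ => t * Real.exp (-(1/2 : ℝ) * t ^ 2)) :=
        integrable_mul_exp_neg_mul_sq (by norm_num)
      have h2 := (h1.div_const (Real.sqrt (2 * Real.pi))).const_mul (-1)
      refine (h2.congr (Filter.Eventually.of_forall fun t => ?_)).integrableOn
      unfold gpdf
      ring_nf
    have := h1.div_const (-y)
    refine this.congr (Filter.Eventually.of_forall fun t => ?_)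
    ring
  calc stdNormalCDF y ≤ ∫ t in Set.Iic y, (-t / -y) * gpdf t := by
        refine setIntegral_mono_on (integrable_gpdf.integrableOn) hint measurableSet_Iic hmono
      _ = (∫ t in Set.Iic y, -t * gpdf t) / (-y) := by
        rw [← integral_div]
        congr 1
        funext t
        ring
      _ = gpdf y / (-y) := by rw [integral_Iic_t_gpdf]




lemma exp_mul_gpdf {T x σ : ℝ} (hT : 0 < T) (hσ : σ ≠ 0) :
    Real.exp x * gpdf (dminus T x σ) = gpdf (dplus T x σ) := by
  have hw : σ * Real.sqrt T ≠ 0 := mul_ne_zero hσ (Real.sqrt_pos.2 hT).ne'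
  unfold gpdf dminus dplus
  rw [mul_div_assoc', ← Real.exp_add]
  congr 1
  field_simp
  ring

lemma hasDerivAt_CBSaux {T x : ℝ} (hT : 0 < T) {σ : ℝ} (hσ : 0 < σ) :
    HasDerivAt (fun u => stdNormalCDF (dplus T x u) - Real.exp x * stdNormalCDF (dminus T x u))
      (gpdf (dplus T x σ) * Real.sqrt T) σ := by
  have hsT : 0 < Real.sqrt T := Real.sqrt_pos.2 hT
  have hw : σ * Real.sqrt T ≠ 0 := mul_ne_zero hσ.ne' hsT.ne'
  have h1 : HasDerivAt (fun u : ℝ => u * Real.sqrt T) (Real.sqrt T) σ := by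
    simpa using (hasDerivAt_id σ).mul_const (Real.sqrt T)
  have h2 : HasDerivAt (fun u : ℝ => -x / (u * Real.sqrt T))
      ((0 * (σ * Real.sqrt T) - (-x) * Real.sqrt T) / (σ * Real.sqrt T) ^ 2) σ :=
    (hasDerivAt_const σ (-x)).div h1 hw
  set D : ℝ := (0 * (σ * Real.sqrt T) - (-x) * Real.sqrt T) / (σ * Real.sqrt T) ^ 2 with hD
  have hdp : HasDerivAt (fun u => dplus T x u) (D + Real.sqrt T / 2) σ := by
    unfold dplus
    exact h2.add (h1.div_const 2)
  have hdm : HasDerivAt (fun u => dminus T x u) (D - Real.sqrt T / 2) σ := by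
    unfold dminus
    exact h2.sub (h1.div_const 2)
  have hp : HasDerivAt (fun u => stdNormalCDF (dplus T x u))
      (gpdf (dplus T x σ) * (D + Real.sqrt T / 2)) σ :=
    (hasDerivAt_stdNormalCDF _).comp σ hdp
  have hm : HasDerivAt (fun u => Real.exp x * stdNormalCDF (dminus T x u))
      (Real.exp x * (gpdf (dminus T x σ) * (D - Real.sqrt T / 2))) σ :=
    ((hasDerivAt_stdNormalCDF _).comp σ hdm).const_mul _
  have := hp.sub hm
  have key : gpdf (dplus T x σ) * (D + Real.sqrt T / 2)
      - Real.exp x * (gpdf (dminus T x σ) * (D - Real.sqrt T / 2))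
      = gpdf (dplus T x σ) * Real.sqrt T := by
    have h3 : Real.exp x * gpdf (dminus T x σ) = gpdf (dplus T x σ) :=
      exp_mul_gpdf hT hσ.ne'
    calc gpdf (dplus T x σ) * (D + Real.sqrt T / 2)
        - Real.exp x * (gpdf (dminus T x σ) * (D - Real.sqrt T / 2))
        = gpdf (dplus T x σ) * (D + Real.sqrt T / 2)
          - (Real.exp x * gpdf (dminus T x σ)) * (D - Real.sqrt T / 2) := by ring
      _ = gpdf (dplus T x σ) * (D + Real.sqrt T / 2)
          - gpdf (dplus T x σ) * (D - Real.sqrt T / 2) := by rw [h3]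
      _ = gpdf (dplus T x σ) * Real.sqrt T := by ring
  rw [key] at this
  exact this

lemma strictMonoOn_CBS {T : ℝ} (hT : 0 < T) (x : ℝ) :
    StrictMonoOn (fun σ => CBS T x σ) (Set.Ioi 0) := by
  have hF : StrictMonoOn
      (fun σ => stdNormalCDF (dplus T x σ) - Real.exp x * stdNormalCDF (dminus T x σ))
      (Set.Ioi 0) := by
    refine strictMonoOn_of_deriv_pos (convex_Ioi 0) ?_ ?_
    · intro σ hσ
      exact ((hasDerivAt_CBSaux hT (Set.mem_Ioi.1 hσ)).continuousAt).continuousWithinAt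
    · intro σ hσ
      rw [interior_Ioi] at hσ
      rw [(hasDerivAt_CBSaux hT (Set.mem_Ioi.1 hσ)).deriv]
      exact mul_pos (gpdf_pos _) (Real.sqrt_pos.2 hT)
  intro a ha b hb hab
  have hCa : CBS T x a = stdNormalCDF (dplus T x a) - Real.exp x * stdNormalCDF (dminus T x a) :=
    if_neg (ne_of_gt (Set.mem_Ioi.1 ha))
  have hCb : CBS T x b = stdNormalCDF (dplus T x b) - Real.exp x * stdNormalCDF (dminus T x b) :=
    if_neg (ne_of_gt (Set.mem_Ioi.1 hb))
  simpa [hCa, hCb] using hF ha hb hab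

lemma tendsto_sqrt_two_mul : Tendsto (fun x : ℝ => Real.sqrt (2 * x)) atTop atTop := by
  refine tendsto_atTop_atTop.2 fun b => ⟨b ^ 2 / 2, fun x hx => ?_⟩
  calc b ≤ |b| := le_abs_self b
    _ = Real.sqrt (b ^ 2) := (Real.sqrt_sq_eq_abs b).symm
    _ ≤ Real.sqrt (2 * x) := Real.sqrt_le_sqrt (by linarith)

lemma tendsto_CBS_shift {T : ℝ} (hT : 0 < T) (a : ℝ) :
    Tendsto (fun x => CBS T x ((Real.sqrt (2 * x) + a) / Real.sqrt T)) atTop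
      (nhds (stdNormalCDF a)) := by
  have hsT : 0 < Real.sqrt T := Real.sqrt_pos.2 hT
  set s : ℝ → ℝ := fun x => Real.sqrt (2 * x) with hs_def
  have hs : Tendsto s atTop atTop := tendsto_sqrt_two_mul
  have hev : ∀ᶠ x : ℝ in atTop, |a| + 1 ≤ s x ∧ (0:ℝ) ≤ x :=
    (hs.eventually_ge_atTop _).and (eventually_ge_atTop 0)
  have hinv : Tendsto (fun x => (s x)⁻¹) atTop (nhds 0) := hs.inv_tendsto_atTop
  -- limit of d₊
  have T1 : Tendsto (fun x => dplus T x ((s x + a) / Real.sqrt T)) atTop (nhds a) := by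
    have hnum : Tendsto (fun x => 2 * a + a ^ 2 * (s x)⁻¹) atTop (nhds (2 * a + a ^ 2 * 0)) :=
      tendsto_const_nhds.add (tendsto_const_nhds.mul hinv)
    have hden : Tendsto (fun x => 2 * (1 + a * (s x)⁻¹)) atTop (nhds (2 * (1 + a * 0))) :=
      tendsto_const_nhds.mul (tendsto_const_nhds.add (tendsto_const_nhds.mul hinv))
    have hq := hnum.div hden (by norm_num)
    have hval : (2 * a + a ^ 2 * 0) / (2 * (1 + a * 0)) = a := by norm_num
    rw [hval] at hq
    refine Tendsto.congr' ?_ hq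
    filter_upwards [hev] with x hx
    obtain ⟨h1, h0⟩ := hx
    have hs1 : (1:ℝ) ≤ s x := le_trans (by linarith [abs_nonneg a]) h1
    have hu1 : (1:ℝ) ≤ s x + a := by linarith [neg_abs_le a]
    have h2x : s x ^ 2 = 2 * x := Real.sq_sqrt (by linarith)
    have hw : (s x + a) / Real.sqrt T * Real.sqrt T = s x + a := div_mul_cancel₀ _ hsT.ne'
    unfold dplus
    simp only [Pi.div_apply]
    rw [hw]
    set u := s x with hu_def
    have hx2 : x = u ^ 2 / 2 := by linarith
    rw [hx2]
    have hu0 : u ≠ 0 := by intro h; rw [h] at hs1; linarith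
    have hua : u + a ≠ 0 := by intro h; linarith
    field_simp
    ring
  -- limit of the e^x * N(d₋) term
  have T2 : Tendsto (fun x => Real.exp x *
      stdNormalCDF (dminus T x ((s x + a) / Real.sqrt T))) atTop (nhds 0) := by
    have hupper : Tendsto (fun x => 1 / (Real.sqrt (2 * Real.pi) * s x)) atTop (nhds 0) := by
      have h1 : Tendsto (fun x => Real.sqrt (2 * Real.pi) * s x) atTop atTop :=
        hs.const_mul_atTop sqrt_two_pi_pos
      exact (tendsto_inv_atTop_zero.comp h1).congr fun x => (one_div _).symm
    refine tendsto_of_tendsto_of_tendsto_of_le_of_le' tendsto_const_nhds hupper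
      (Filter.Eventually.of_forall fun x =>
        mul_nonneg (Real.exp_pos x).le (stdNormalCDF_nonneg _)) ?_
    filter_upwards [hev] with x hx
    obtain ⟨h1, h0⟩ := hx
    have hs1 : (1:ℝ) ≤ s x := le_trans (by linarith [abs_nonneg a]) h1
    have hu1 : (1:ℝ) ≤ s x + a := by linarith [neg_abs_le a]
    have h2x : s x ^ 2 = 2 * x := Real.sq_sqrt (by linarith)
    have hw : (s x + a) / Real.sqrt T * Real.sqrt T = s x + a := div_mul_cancel₀ _ hsT.ne'
    set dm := dminus T x ((s x + a) / Real.sqrt T) with hdm_def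
    set u := s x + a with hu_def
    have hdm_eq : dm = -((s x) ^ 2 + u ^ 2) / (2 * u) := by
      rw [hdm_def]
      unfold dminus
      rw [hw]
      have hx2 : x = s x ^ 2 / 2 := by linarith
      set v := s x with hv_def
      rw [hx2]
      have hu0 : u ≠ 0 := by intro h; linarith
      field_simp
      ring
    have hdm_neg : dm < 0 := by
      rw [hdm_eq]
      have hpos : 0 < ((s x) ^ 2 + u ^ 2) / (2 * u) := by positivity
      rw [neg_div]
      linarith
    have hge : s x ≤ -dm := by
      rw [hdm_eq, neg_div, neg_neg, le_div_iff₀ (by linarith : (0:ℝ) < 2 * u)]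
      nlinarith [sq_nonneg (s x - u)]
    calc Real.exp x * stdNormalCDF dm
        ≤ Real.exp x * (gpdf dm / (-dm)) :=
          mul_le_mul_of_nonneg_left (stdNormalCDF_le_of_neg hdm_neg) (Real.exp_pos x).le
      _ = Real.exp (x + -dm ^ 2 / 2) / (Real.sqrt (2 * Real.pi) * (-dm)) := by
          unfold gpdf
          rw [Real.exp_add]
          ring
      _ ≤ 1 / (Real.sqrt (2 * Real.pi) * s x) := by
          refine div_le_div₀ (by norm_num) ?_ (by positivity) ?_
          · rw [Real.exp_le_one_iff]
            nlinarith [hge, h2x, hs1]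
          · have := mul_le_mul_of_nonneg_left hge sqrt_two_pi_pos.le
            linarith
  -- combine
  have hcomb := ((continuous_stdNormalCDF.continuousAt.tendsto).comp T1).sub T2
  rw [sub_zero] at hcomb
  refine Tendsto.congr' ?_ hcomb
  filter_upwards [hev] with x hx
  obtain ⟨h1, h0⟩ := hx
  have hs1 : (1:ℝ) ≤ s x := le_trans (by linarith [abs_nonneg a]) h1
  have hu1 : (1:ℝ) ≤ s x + a := by linarith [neg_abs_le a]
  have hσ : (s x + a) / Real.sqrt T ≠ 0 := (div_pos (by linarith) hsT).ne'
  simp only [Function.comp]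
  rw [CBS, if_neg hσ]

/-- right-wing expansion of the implied volatility in strict local
martingale models: `I(x) = √(2x/T) + N⁻¹(α m)/√T + o(1)` as `x → ∞`. -/
theorem iv_right_wing_expansion_strict_local_martingale
    {Ω : Type*} [MeasurableSpace Ω] (μ : Measure Ω) [IsProbabilityMeasure μ]
    (S : Ω → ℝ) (hS : ∀ ω, 0 ≤ S ω) (hSint : Integrable S μ)
    (m : ℝ) (hm : m = 1 - ∫ ω, S ω ∂μ) (hm0 : 0 < m) (hm1 : m < 1)
    (T : ℝ) (hT : 0 < T) (α : ℝ) (hα : α ∈ Set.Ioc (0:ℝ) 1)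
    (x₀ : ℝ) (I : ℝ → ℝ) (hInonneg : ∀ x, 0 ≤ I x)
    (hI : ∀ x : ℝ, x₀ ≤ x →
      CBS T x (I x) = (∫ ω, max (S ω - Real.exp x) 0 ∂μ) + α * m)
    (c : ℝ) (hc : stdNormalCDF c = α * m) :
    Tendsto (fun x => I x - Real.sqrt (2 * x / T)) atTop (nhds (c / Real.sqrt T)) := by
  have hsT : 0 < Real.sqrt T := Real.sqrt_pos.2 hT
  have hαm : 0 < α * m := mul_pos hα.1 hm0
  have hPint : Tendsto (fun x => ∫ ω, max (S ω - Real.exp x) 0 ∂μ) atTop (nhds 0) := by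
    have h := tendsto_integral_filter_of_dominated_convergence (μ := μ) (l := atTop)
      (F := fun (x : ℝ) ω => max (S ω - Real.exp x) 0) (f := fun _ => (0:ℝ)) (bound := S)
      (Filter.Eventually.of_forall fun x =>
        (((hSint.aemeasurable.sub aemeasurable_const).max
          aemeasurable_const).aestronglyMeasurable))
      (Filter.Eventually.of_forall fun x => ae_of_all μ fun ω => by
        rw [Real.norm_eq_abs, abs_of_nonneg (le_max_right _ _)]
        exact max_le (by linarith [Real.exp_pos x, hS ω]) (hS ω))
      hSint
      (ae_of_all μ fun ω => by
        have hev : ∀ᶠ x : ℝ in atTop, max (S ω - Real.exp x) 0 = 0 := by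
          filter_upwards [Real.tendsto_exp_atTop.eventually_ge_atTop (S ω)] with x hx
          exact max_eq_right (by linarith)
        exact tendsto_const_nhds.congr' (hev.mono fun x h => h.symm))
    simpa using h
  have hP : Tendsto (fun x => (∫ ω, max (S ω - Real.exp x) 0 ∂μ) + α * m) atTop
      (nhds (α * m)) := by
    simpa using hPint.add (tendsto_const_nhds (x := α * m))
  have hInt_nonneg : ∀ x : ℝ, 0 ≤ ∫ ω, max (S ω - Real.exp x) 0 ∂μ := fun x =>
    integral_nonneg fun ω => le_max_right _ _
  have hIpos : ∀ᶠ x : ℝ in atTop, 0 < I x := by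
    filter_upwards [eventually_ge_atTop x₀, eventually_ge_atTop (0:ℝ)] with x hx hx0
    rcases (hInonneg x).lt_or_eq with h | h
    · exact h
    · exfalso
      have heq := hI x hx
      rw [← h, CBS, if_pos rfl] at heq
      have h1 : max (1 - Real.exp x) 0 = 0 :=
        max_eq_right (by linarith [Real.one_le_exp hx0])
      rw [h1] at heq
      nlinarith [hInt_nonneg x]
  rw [show c / Real.sqrt T = c / Real.sqrt T from rfl]
  refine tendsto_order.2 ⟨?_, ?_⟩
  · intro b hb
    set a1 := b * Real.sqrt T with ha1_def
    have ha1c : a1 < c := by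
      rw [ha1_def, ← lt_div_iff₀ hsT]
      exact hb
    have hN : stdNormalCDF a1 < α * m := by
      rw [← hc]; exact strictMono_stdNormalCDF ha1c
    have h1 := (tendsto_CBS_shift hT a1).eventually_lt_const
      (show stdNormalCDF a1 < (stdNormalCDF a1 + α * m) / 2 by linarith)
    have h2 := hP.eventually_const_lt
      (show (stdNormalCDF a1 + α * m) / 2 < α * m by linarith)
    filter_upwards [h1, h2, hIpos, eventually_ge_atTop x₀, eventually_ge_atTop (0:ℝ),
      tendsto_sqrt_two_mul.eventually_ge_atTop (|a1| + 1)] with x e1 e2 e3 e4 e5 e6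
    have hσ1pos : 0 < (Real.sqrt (2 * x) + a1) / Real.sqrt T :=
      div_pos (by linarith [neg_abs_le a1]) hsT
    have hlt : CBS T x ((Real.sqrt (2 * x) + a1) / Real.sqrt T) < CBS T x (I x) := by
      rw [hI x e4]; linarith
    have hvol : (Real.sqrt (2 * x) + a1) / Real.sqrt T < I x := by
      by_contra hcon
      push_neg at hcon
      have := (strictMonoOn_CBS hT x).monotoneOn (Set.mem_Ioi.2 e3)
        (Set.mem_Ioi.2 hσ1pos) hcon
      linarith
    have hsplit : Real.sqrt (2 * x / T) = Real.sqrt (2 * x) / Real.sqrt T :=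
      Real.sqrt_div (by linarith) T
    have hb' : b = a1 / Real.sqrt T := by
      rw [ha1_def, mul_div_cancel_right₀ b hsT.ne']
    rw [hsplit, hb']
    rw [add_div] at hvol
    linarith
  · intro b hb
    set a2 := b * Real.sqrt T with ha2_def
    have ha2c : c < a2 := by
      rw [ha2_def, ← div_lt_iff₀ hsT]
      exact hb
    have hN : α * m < stdNormalCDF a2 := by
      rw [← hc]; exact strictMono_stdNormalCDF ha2c
    have h1 := (tendsto_CBS_shift hT a2).eventually_const_lt
      (show (α * m + stdNormalCDF a2) / 2 < stdNormalCDF a2 by linarith)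
    have h2 := hP.eventually_lt_const
      (show α * m < (α * m + stdNormalCDF a2) / 2 by linarith)
    filter_upwards [h1, h2, hIpos, eventually_ge_atTop x₀, eventually_ge_atTop (0:ℝ),
      tendsto_sqrt_two_mul.eventually_ge_atTop (|a2| + 1)] with x e1 e2 e3 e4 e5 e6
    have hσ2pos : 0 < (Real.sqrt (2 * x) + a2) / Real.sqrt T :=
      div_pos (by linarith [neg_abs_le a2]) hsT
    have hlt : CBS T x (I x) < CBS T x ((Real.sqrt (2 * x) + a2) / Real.sqrt T) := by
      rw [hI x e4]; linarith
    have hvol : I x < (Real.sqrt (2 * x) + a2) / Real.sqrt T := by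
      by_contra hcon
      push_neg at hcon
      have := (strictMonoOn_CBS hT x).monotoneOn (Set.mem_Ioi.2 hσ2pos)
        (Set.mem_Ioi.2 e3) hcon
      linarith
    have hsplit : Real.sqrt (2 * x / T) = Real.sqrt (2 * x) / Real.sqrt T :=
      Real.sqrt_div (by linarith) T
    have hb' : b = a2 / Real.sqrt T := by
      rw [ha2_def, mul_div_cancel_right₀ b hsT.ne']
    rw [hsplit, hb']
    rw [add_div] at hvol
    linarith
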